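/- Let A, B be basic hoops and p : A → B, s : B → A homomorphisms with p ∘ s = id_B and s a strong section, let X = {a ∈ A | p(a) = 1}, and let Y' = {(x, b) ∈ X × B | s(b) → (s(b) · x) = x} with the hoop operations (x, b) → (y, b') = (s(b' → b) → (x → y), b → b') and (x, b) · (y, b') = (s(b · b') → (s(b · b') · x · y), b · b'). Then for all (x, b), (y, b') ∈ Y': (x, b) ∧ (y, b') = (s(b ∧ b') → (s(b ∧ b') · (x ∧ y)), b ∧ b') and (x, b) ∨ (y, b') = (s(b ∨ b') → (s(b ∨ b') · (((s(b' → b) → (x → y)) → y) ∧ ((s(b → b') → (y → x)) → x))), b ∨ b'), where in any basic hoop u ∧ v := u · (u → v) and u ∨ v := ((u → v) → v) ∧ ((v → u) → u). -/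
import Mathlib


class Hoop (α : Type*) extends CommMonoid α, HImp α where
  himp_self : ∀ x : α, x ⇨ x = 1
  mul_himp_comm : ∀ x y : α, x * (x ⇨ y) = y * (y ⇨ x)
  mul_himp_assoc : ∀ x y z : α, (x * y) ⇨ z = x ⇨ (y ⇨ z)

/-- A basic hoop: a hoop satisfying `((x → y) → z) → (((y → x) → z) → z) = 1`. -/
class BasicHoop (α : Type*) extends Hoop α where
  basic : ∀ x y z : α, ((x ⇨ y) ⇨ z) ⇨ (((y ⇨ x) ⇨ z) ⇨ z) = 1

/-- The meet `u ∧ v := u · (u → v)` of a hoop. -/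
def hmeet {α : Type*} [Hoop α] (x y : α) : α := x * (x ⇨ y)

/-- The join `u ∨ v := ((u → v) → v) ∧ ((v → u) → u)` of a basic hoop. -/
def hjoin {α : Type*} [Hoop α] (x y : α) : α :=
  hmeet ((x ⇨ y) ⇨ y) ((y ⇨ x) ⇨ x)

/-- The multiplication of the semidirect product. -/
def Ymul {A B : Type*} [Hoop A] [Hoop B] (s : B → A) (q r : A × B) : A × B :=
  (s (q.2 * r.2) ⇨ (s (q.2 * r.2) * q.1 * r.1), q.2 * r.2)

/-- The implication of the semidirect product. -/
def Yimp {A B : Type*} [Hoop A] [Hoop B] (s : B → A) (q r : A × B) : A × B :=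
  (s (r.2 ⇨ q.2) ⇨ (q.1 ⇨ r.1), q.2 ⇨ r.2)

/-- The meet of the semidirect product hoop. -/
def Ymeet {A B : Type*} [Hoop A] [Hoop B] (s : B → A) (q r : A × B) : A × B :=
  Ymul s q (Yimp s q r)

/-- The join of the semidirect product hoop. -/
def Yjoin {A B : Type*} [Hoop A] [Hoop B] (s : B → A) (q r : A × B) : A × B :=
  Ymeet s (Yimp s (Yimp s q r) r) (Yimp s (Yimp s r q) q)

/-- Membership in `Y' = {(x,b) ∈ X × B | s b → (s b · x) = x}` where `X = ker p`. -/
def memY' {A B : Type*} [Hoop A] [Hoop B] (p : A → B) (s : B → A) (q : A × B) : Prop :=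
  p q.1 = 1 ∧ s q.2 ⇨ (s q.2 * q.1) = q.1

section HoopLemmas

variable {α : Type*} [Hoop α]

lemma hoop_one_himp (a : α) : 1 ⇨ a = a := by
  have a1 : ∀ y z : α, 1 ⇨ (y ⇨ z) = y ⇨ z := fun y z => by
    rw [← Hoop.mul_himp_assoc, one_mul]
  have c : ∀ t : α, t * (t ⇨ 1) = 1 ⇨ t := fun t => by
    rw [Hoop.mul_himp_comm, one_mul]
  have hE : (a ⇨ 1) * ((a ⇨ 1) ⇨ 1) = a ⇨ 1 := by rw [c (a ⇨ 1), a1 a 1]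
  have hxu : a ⇨ (1 ⇨ a) = 1 := by
    have h := Hoop.mul_himp_assoc a 1 a
    rw [mul_one] at h
    rw [← h, Hoop.himp_self]
  have hB : a = (1 ⇨ a) * ((1 ⇨ a) ⇨ a) := by
    have h2 := Hoop.mul_himp_comm a (1 ⇨ a)
    rw [hxu, mul_one] at h2
    exact h2
  have hF : (1 ⇨ a) ⇨ a = (a ⇨ 1) ⇨ 1 := by
    calc (1 ⇨ a) ⇨ a = (a * (a ⇨ 1)) ⇨ a := by rw [c]
      _ = ((a ⇨ 1) * a) ⇨ a := by rw [mul_comm]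
      _ = (a ⇨ 1) ⇨ (a ⇨ a) := Hoop.mul_himp_assoc _ _ _
      _ = (a ⇨ 1) ⇨ 1 := by rw [Hoop.himp_self]
  calc 1 ⇨ a = a * (a ⇨ 1) := (c a).symm
    _ = a * ((a ⇨ 1) * ((a ⇨ 1) ⇨ 1)) := by rw [hE]
    _ = (1 ⇨ a) * ((a ⇨ 1) ⇨ 1) := by rw [← mul_assoc, c a]
    _ = (1 ⇨ a) * ((1 ⇨ a) ⇨ a) := by rw [hF]
    _ = a := hB.symm

lemma hoop_himp_one (a : α) : a ⇨ 1 = 1 := by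
  have hx : a * (a ⇨ 1) = a := by
    rw [Hoop.mul_himp_comm, one_mul, hoop_one_himp]
  calc a ⇨ 1 = (a * (a ⇨ 1)) ⇨ 1 := by rw [hx]
    _ = ((a ⇨ 1) * a) ⇨ 1 := by rw [mul_comm]
    _ = (a ⇨ 1) ⇨ (a ⇨ 1) := Hoop.mul_himp_assoc _ _ _
    _ = 1 := Hoop.himp_self _

end HoopLemmas

/-- The key computation: the semidirect-product meet of two pairs whose first components
lie in the kernel of `p` has the stated normal form.  Only needs `p x = 1`, `p y = 1`
and the section/strongness identities. -/
lemma keymeet {A B : Type*} [Hoop A] [Hoop B] (p : A → B) (s : B → A)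
    (hpi : ∀ a a' : A, p (a ⇨ a') = p a ⇨ p a')
    (hs1 : s 1 = 1) (hsm : ∀ b b' : B, s (b * b') = s b * s b')
    (hss : ∀ (a : A) (b : B), a ⇨ s b = s (p a) ⇨ s b)
    (x y : A) (b b' : B) (hx : p x = 1) (hy : p y = 1) :
    Ymeet s (x, b) (y, b')
      = (s (hmeet b b') ⇨ (s (hmeet b b') * hmeet x y), hmeet b b') := by
  have hw : p (x ⇨ y) = 1 := by rw [hpi, hx, hy, Hoop.himp_self]
  have hbm : s (b * (b ⇨ b')) = s b' * s (b' ⇨ b) := by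
    rw [Hoop.mul_himp_comm b b', hsm]
  have step : s (b' ⇨ b) * (s (b' ⇨ b) ⇨ (x ⇨ y)) = s (b' ⇨ b) * (x ⇨ y) := by
    rw [Hoop.mul_himp_comm, hss, hw, hs1, hoop_one_himp, mul_comm]
  have main : s (b * (b ⇨ b')) * x * (s (b' ⇨ b) ⇨ (x ⇨ y))
      = s (b * (b ⇨ b')) * (x * (x ⇨ y)) := by
    rw [hbm]
    calc s b' * s (b' ⇨ b) * x * (s (b' ⇨ b) ⇨ (x ⇨ y))
        = s b' * x * (s (b' ⇨ b) * (s (b' ⇨ b) ⇨ (x ⇨ y))) := by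
          rw [mul_right_comm (s b') (s (b' ⇨ b)) x, mul_assoc]
      _ = s b' * x * (s (b' ⇨ b) * (x ⇨ y)) := by rw [step]
      _ = s b' * s (b' ⇨ b) * (x * (x ⇨ y)) := by
          rw [mul_assoc, mul_left_comm x (s (b' ⇨ b)) (x ⇨ y), ← mul_assoc]
  show (_, _) = (_, _)
  simp only [Ymeet, Ymul, Yimp, hmeet]
  exact Prod.ext (by rw [main]) rfl

/-- For a split extension of basic hoops with strong section, the lattice operations of
the semidirect product `Y'` are given by
`(x,b) ∧ (y,b') = (s(b ∧ b') → (s(b ∧ b') · (x ∧ y)), b ∧ b')` and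
`(x,b) ∨ (y,b') = (s(b ∨ b') → (s(b ∨ b') · (((s(b' → b) → (x → y)) → y) ∧
  ((s(b → b') → (y → x)) → x))), b ∨ b')`. -/
theorem stmt4 {A B : Type*} [BasicHoop A] [BasicHoop B] (p : A → B) (s : B → A)
    (hp1 : p 1 = 1) (hpm : ∀ a a' : A, p (a * a') = p a * p a')
    (hpi : ∀ a a' : A, p (a ⇨ a') = p a ⇨ p a')
    (hs1 : s 1 = 1) (hsm : ∀ b b' : B, s (b * b') = s b * s b')
    (hsi : ∀ b b' : B, s (b ⇨ b') = s b ⇨ s b')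
    (hps : ∀ b : B, p (s b) = b)
    (hss : ∀ (a : A) (b : B), a ⇨ s b = s (p a) ⇨ s b)
    (x y : A) (b b' : B)
    (hq : memY' p s (x, b)) (hr : memY' p s (y, b')) :
    Ymeet s (x, b) (y, b')
      = (s (hmeet b b') ⇨ (s (hmeet b b') * hmeet x y), hmeet b b') ∧
    Yjoin s (x, b) (y, b')
      = (s (hjoin b b') ⇨ (s (hjoin b b') *
          hmeet ((s (b' ⇨ b) ⇨ (x ⇨ y)) ⇨ y) ((s (b ⇨ b') ⇨ (y ⇨ x)) ⇨ x)),
          hjoin b b') := by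
  constructor
  · exact keymeet p s hpi hs1 hsm hss x y b b' hq.1 hr.1
  · have hb1 : b' ⇨ (b ⇨ b') = 1 := by
      calc b' ⇨ (b ⇨ b') = (b' * b) ⇨ b' := (Hoop.mul_himp_assoc b' b b').symm
        _ = (b * b') ⇨ b' := by rw [mul_comm]
        _ = b ⇨ (b' ⇨ b') := Hoop.mul_himp_assoc _ _ _
        _ = b ⇨ 1 := by rw [Hoop.himp_self]
        _ = 1 := hoop_himp_one _
    have hb2 : b ⇨ (b' ⇨ b) = 1 := by
      calc b ⇨ (b' ⇨ b) = (b * b') ⇨ b := (Hoop.mul_himp_assoc b b' b).symm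
        _ = (b' * b) ⇨ b := by rw [mul_comm]
        _ = b' ⇨ (b ⇨ b) := Hoop.mul_himp_assoc _ _ _
        _ = b' ⇨ 1 := by rw [Hoop.himp_self]
        _ = 1 := hoop_himp_one _
    have hpu : p (s (b' ⇨ b) ⇨ (x ⇨ y)) = 1 := by
      rw [hpi, hps, hpi, hq.1, hr.1, Hoop.himp_self, hoop_himp_one]
    have hpv : p (s (b ⇨ b') ⇨ (y ⇨ x)) = 1 := by
      rw [hpi, hps, hpi, hq.1, hr.1, Hoop.himp_self, hoop_himp_one]
    have hpuy : p ((s (b' ⇨ b) ⇨ (x ⇨ y)) ⇨ y) = 1 := by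
      rw [hpi, hpu, hr.1, Hoop.himp_self]
    have hpvx : p ((s (b ⇨ b') ⇨ (y ⇨ x)) ⇨ x) = 1 := by
      rw [hpi, hpv, hq.1, Hoop.himp_self]
    have hq2 : Yimp s (Yimp s ((x, b) : A × B) (y, b')) (y, b')
        = ((s (b' ⇨ b) ⇨ (x ⇨ y)) ⇨ y, (b ⇨ b') ⇨ b') := by
      simp only [Yimp]
      rw [hb1, hs1, hoop_one_himp]
    have hr2 : Yimp s (Yimp s ((y, b') : A × B) (x, b)) (x, b)
        = ((s (b ⇨ b') ⇨ (y ⇨ x)) ⇨ x, (b' ⇨ b) ⇨ b) := by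
      simp only [Yimp]
      rw [hb2, hs1, hoop_one_himp]
    show Ymeet s _ _ = _
    rw [hq2, hr2]
    simp only [hjoin]
    exact keymeet p s hpi hs1 hsm hss _ _ _ _ hpuy hpvx
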